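/- Let p be a prime and f ∈ ℤ[x]. Then the following statements are equivalent: (1) f is a permutation polynomial on ℤ_{p^n}[α] for all n ≥ 1; (2) f is a permutation polynomial on ℤ_{p^n}[α] for some n ≥ 1; (3) f is a permutation polynomial on ℤ_p and for all a ∈ ℤ, f′(a) ≢ 0 (mod p); (4) f is a permutation polynomial on ℤ_{p^n} for all n ≥ 1; (5) f is a permutation polynomial on ℤ_{p^n} for some n > 1. -/

import Mathlib

open Polynomial TrivSqZeroExt

section Aux
variable {A B : Type*} [CommRing A] [CommRing B]

lemma PPaux.aeval_ringHom_apply (φ : A →+* B) (x : A) (f : ℤ[X]) :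
    aeval (φ x) f = φ (aeval x f) :=
  aeval_algHom_apply φ.toIntAlgHom x f

lemma PPaux.aeval_add_of_sq_eq_zero (f : ℤ[X]) (x y : A) (hy : y ^ 2 = 0) :
    aeval (x + y) f = aeval x f + aeval x (derivative f) * y := by
  simp only [aeval_def, eval₂_eq_eval_map, ← derivative_map]
  exact Polynomial.eval_add_of_sq_eq_zero _ x y hy

lemma PPaux.eval_add_sq (f : ℤ[X]) (x c : ℤ) :
    ∃ s, eval (x + c) f = eval x f + eval x (derivative f) * c + c ^ 2 * s := by
  obtain ⟨h, hh⟩ : (X : ℤ[X]) ^ 2 ∣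
      taylor x f - C (eval x f) - C (eval x (derivative f)) * X := by
    rw [X_pow_dvd_iff]
    intro d hd
    interval_cases d <;>
      simp [-eq_intCast, coeff_sub, coeff_C_mul, coeff_C, coeff_X, taylor_coeff_zero, taylor_coeff_one]
  refine ⟨eval c h, ?_⟩
  have h2 := congrArg (eval c) hh
  simp only [eval_sub, eval_mul, eval_C, eval_X, eval_pow, taylor_eval] at h2
  have : eval (c + x) f - eval x f - eval x (derivative f) * c = c ^ 2 * eval c h := h2
  rw [add_comm x c]
  linarith

lemma PPaux.aeval_intCast_zmod (m : ℕ) (f : ℤ[X]) (a : ℤ) :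
    aeval ((a : ZMod m)) f = ((eval a f : ℤ) : ZMod m) := by
  have h := PPaux.aeval_ringHom_apply (Int.castRingHom (ZMod m)) a f
  simpa using h

end Aux
section Dual
variable {R : Type*} [CommRing R]

lemma PPaux.aeval_dual (f : ℤ[X]) (z : DualNumber R) :
    aeval z f = TrivSqZeroExt.inl (aeval z.fst f) +
      TrivSqZeroExt.inr (aeval z.fst (derivative f) * z.snd) := by
  conv_lhs => rw [← TrivSqZeroExt.inl_fst_add_inr_snd_eq z]
  have hsq : (TrivSqZeroExt.inr z.snd : DualNumber R) ^ 2 = 0 := by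
    rw [sq, TrivSqZeroExt.inr_mul_inr]
  erw [PPaux.aeval_add_of_sq_eq_zero f _ _ hsq]
  have h1 : aeval (TrivSqZeroExt.inl z.fst : DualNumber R) f
      = TrivSqZeroExt.inl (aeval z.fst f) :=
    PPaux.aeval_ringHom_apply (TrivSqZeroExt.inlHom R R) z.fst f
  have h2 : aeval (TrivSqZeroExt.inl z.fst : DualNumber R) (derivative f)
      = TrivSqZeroExt.inl (aeval z.fst (derivative f)) :=
    PPaux.aeval_ringHom_apply (TrivSqZeroExt.inlHom R R) z.fst (derivative f)
  erw [h1, h2, TrivSqZeroExt.inl_mul_inr, smul_eq_mul]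

lemma PPaux.fst_aeval_dual (f : ℤ[X]) (z : DualNumber R) :
    (aeval z f).fst = aeval z.fst f := by
  rw [PPaux.aeval_dual]
  simp [TrivSqZeroExt.fst_add, TrivSqZeroExt.fst_inl, TrivSqZeroExt.fst_inr]

lemma PPaux.snd_aeval_dual (f : ℤ[X]) (z : DualNumber R) :
    (aeval z f).snd = aeval z.fst (derivative f) * z.snd := by
  rw [PPaux.aeval_dual]
  simp [TrivSqZeroExt.snd_add, TrivSqZeroExt.snd_inl, TrivSqZeroExt.snd_inr]

lemma PPaux.dual_bij_iff [Finite R] (f : ℤ[X]) :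
    Function.Bijective (fun z : DualNumber R => aeval z f) ↔
      Function.Bijective (fun a : R => aeval a f) ∧
        ∀ a : R, IsUnit (aeval a (derivative f)) := by
  haveI : Finite (DualNumber R) := inferInstanceAs (Finite (R × R))
  constructor
  · intro h
    constructor
    · rw [← Finite.injective_iff_bijective]
      intro a b hab
      have e1 : aeval (TrivSqZeroExt.inl a : DualNumber R) f
          = TrivSqZeroExt.inl (aeval a f) :=
        PPaux.aeval_ringHom_apply (TrivSqZeroExt.inlHom R R) a f
      have e2 : aeval (TrivSqZeroExt.inl b : DualNumber R) f
          = TrivSqZeroExt.inl (aeval b f) :=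
        PPaux.aeval_ringHom_apply (TrivSqZeroExt.inlHom R R) b f
      have key : aeval (TrivSqZeroExt.inl a : DualNumber R) f
          = aeval (TrivSqZeroExt.inl b : DualNumber R) f := by
        rw [e1, e2]; exact congrArg _ hab
      have := h.1 key
      exact TrivSqZeroExt.inl_injective this
    · intro a
      have hinj : Function.Injective
          (fun b : R => aeval a (derivative f) * b) := by
        intro b b' hb
        have key : aeval (TrivSqZeroExt.inl a + TrivSqZeroExt.inr b : DualNumber R) f
            = aeval (TrivSqZeroExt.inl a + TrivSqZeroExt.inr b' : DualNumber R) f := by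
          apply TrivSqZeroExt.ext
          · rw [PPaux.fst_aeval_dual, PPaux.fst_aeval_dual]
            simp
          · rw [PPaux.snd_aeval_dual, PPaux.snd_aeval_dual]
            simpa using hb
        have := h.1 key
        have := congrArg TrivSqZeroExt.snd this
        simpa using this
      have hsurj := Finite.injective_iff_surjective.mp hinj
      obtain ⟨b, hb⟩ := hsurj 1
      exact IsUnit.of_mul_eq_one b hb
  · rintro ⟨hbij, hunit⟩
    rw [← Finite.injective_iff_bijective]
    intro z w hzw
    have hfst : z.fst = w.fst := by
      apply hbij.1
      have := congrArg TrivSqZeroExt.fst hzw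
      rwa [PPaux.fst_aeval_dual, PPaux.fst_aeval_dual] at this
    have hsnd : z.snd = w.snd := by
      have h2 := congrArg TrivSqZeroExt.snd hzw
      rw [PPaux.snd_aeval_dual, PPaux.snd_aeval_dual, hfst] at h2
      exact (hunit w.fst).mul_left_cancel h2
    exact TrivSqZeroExt.ext hfst hsnd

end Dual

section ZModAux

lemma PPaux.inj_iff (m : ℕ) (f : ℤ[X]) :
    Function.Injective (fun a : ZMod m => aeval a f) ↔
      ∀ x y : ℤ, (m : ℤ) ∣ eval x f - eval y f → (m : ℤ) ∣ x - y := by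
  constructor
  · intro h x y hd
    have h1 : ((eval x f : ℤ) : ZMod m) = ((eval y f : ℤ) : ZMod m) := by
      rwa [← sub_eq_zero, ← Int.cast_sub, ZMod.intCast_zmod_eq_zero_iff_dvd]
    have h2 : (x : ZMod m) = (y : ZMod m) := by
      apply h
      simpa only [PPaux.aeval_intCast_zmod] using h1
    rwa [← sub_eq_zero, ← Int.cast_sub, ZMod.intCast_zmod_eq_zero_iff_dvd] at h2
  · intro h a b hab
    obtain ⟨x, rfl⟩ := ZMod.intCast_surjective a
    obtain ⟨y, rfl⟩ := ZMod.intCast_surjective b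
    simp only [PPaux.aeval_intCast_zmod] at hab
    have h1 : (m : ℤ) ∣ eval x f - eval y f := by
      rwa [← ZMod.intCast_zmod_eq_zero_iff_dvd, Int.cast_sub, sub_eq_zero]
    have h2 := h x y h1
    rwa [← ZMod.intCast_zmod_eq_zero_iff_dvd, Int.cast_sub, sub_eq_zero] at h2

lemma PPaux.surj_descend {N M : ℕ} (hMN : M ∣ N) (f : ℤ[X])
    (h : Function.Surjective (fun a : ZMod N => aeval a f)) :
    Function.Surjective (fun a : ZMod M => aeval a f) := by
  intro c
  obtain ⟨c₀, rfl⟩ := ZMod.intCast_surjective c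
  obtain ⟨a, ha⟩ := h ((c₀ : ZMod N))
  obtain ⟨a₀, rfl⟩ := ZMod.intCast_surjective a
  refine ⟨(a₀ : ZMod M), ?_⟩
  simp only [PPaux.aeval_intCast_zmod] at ha ⊢
  have h1 : (N : ℤ) ∣ eval a₀ f - c₀ := by
    rwa [← ZMod.intCast_zmod_eq_zero_iff_dvd, Int.cast_sub, sub_eq_zero]
  have h2 : (M : ℤ) ∣ eval a₀ f - c₀ :=
    dvd_trans (Int.natCast_dvd_natCast.mpr hMN) h1
  rwa [← sub_eq_zero, ← Int.cast_sub, ZMod.intCast_zmod_eq_zero_iff_dvd]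

lemma PPaux.isUnit_cast {p : ℕ} (hp : p.Prime) (n : ℕ) {k : ℤ}
    (hk : ¬ (p : ℤ) ∣ k) : IsUnit ((k : ZMod (p ^ n))) := by
  have h1 : Nat.Coprime k.natAbs p := by
    rw [Nat.coprime_comm]
    rw [hp.coprime_iff_not_dvd]
    intro hd
    exact hk (Int.natAbs_dvd.mp (Int.natCast_dvd_natCast.mpr hd |>.trans (Int.natAbs_dvd.mpr dvd_rfl)))
  have h2 : IsUnit ((k.natAbs : ZMod (p ^ n))) :=
    (ZMod.isUnit_iff_coprime _ _).mpr (h1.pow_right n)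
  rcases Int.natAbs_eq k with he | he
  · rw [he, Int.cast_natCast]; exact h2
  · rw [he, Int.cast_neg, Int.cast_natCast]; exact h2.neg
lemma PPaux.not_isUnit_cast {p : ℕ} (hp : p.Prime) {n : ℕ} (hn : 1 ≤ n) {k : ℤ}
    (hk : (p : ℤ) ∣ k) : ¬ IsUnit ((k : ZMod (p ^ n))) := by
  haveI : Fact p.Prime := ⟨hp⟩
  intro h
  have h2 := h.map (ZMod.castHom (dvd_pow_self p (Nat.one_le_iff_ne_zero.mp hn)) (ZMod p))
  rw [map_intCast] at h2
  rw [ZMod.intCast_zmod_eq_zero_iff_dvd k p |>.mpr hk] at h2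
  exact (not_isUnit_zero h2 : False)

end ZModAux
section Hensel
variable {p : ℕ}

lemma PPaux.lift_inj (hp : p.Prime) (f : ℤ[X])
    (h1 : ∀ x y : ℤ, (p : ℤ) ∣ eval x f - eval y f → (p : ℤ) ∣ x - y)
    (h2 : ∀ a : ℤ, ¬ (p : ℤ) ∣ eval a (derivative f)) :
    ∀ n : ℕ, 1 ≤ n →
      ∀ x y : ℤ, (p : ℤ) ^ n ∣ eval x f - eval y f → (p : ℤ) ^ n ∣ x - y := by
  intro n
  induction n with
  | zero => omega
  | succ n ih =>
    intro _ x y hd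
    rcases Nat.eq_zero_or_pos n with rfl | hn
    · simpa using h1 x y (by simpa using hd)
    · have hd' : (p : ℤ) ^ n ∣ eval x f - eval y f :=
        dvd_trans (pow_dvd_pow _ (Nat.le_succ n)) hd
      obtain ⟨t, ht⟩ := ih hn x y hd'
      obtain ⟨s, hs⟩ := PPaux.eval_add_sq f y ((p : ℤ) ^ n * t)
      have hx : x = y + (p : ℤ) ^ n * t := by linarith
      have key : eval x f - eval y f
          = (p : ℤ) ^ n * (eval y (derivative f) * t + (p : ℤ) ^ n * t ^ 2 * s) := by
        rw [hx, hs]; ring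
      rw [key, pow_succ] at hd
      have hpn : ((p : ℤ)) ^ n ≠ 0 :=
        pow_ne_zero _ (by exact_mod_cast hp.ne_zero)
      have hc : (p : ℤ) ∣ eval y (derivative f) * t + (p : ℤ) ^ n * t ^ 2 * s :=
        (mul_dvd_mul_iff_left hpn).mp hd
      have hpB : (p : ℤ) ∣ (p : ℤ) ^ n * t ^ 2 * s :=
        ((dvd_pow_self (p : ℤ) hn.ne').mul_right _).mul_right _
      have hft : (p : ℤ) ∣ eval y (derivative f) * t := by
        have := dvd_sub hc hpB
        simpa using this
      have hpp : Prime ((p : ℤ)) := Nat.prime_iff_prime_int.mp hp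
      rcases hpp.dvd_mul.mp hft with hca | hct
      · exact absurd hca (h2 y)
      · obtain ⟨u, hu⟩ := hct
        exact ⟨u, by rw [ht, hu, pow_succ]; ring⟩

lemma PPaux.bij_pow (hp : p.Prime) (f : ℤ[X])
    (h3 : Function.Bijective (fun a : ZMod p => aeval a f))
    (h2 : ∀ a : ℤ, ¬ (p : ℤ) ∣ eval a (derivative f)) (n : ℕ) (hn : 1 ≤ n) :
    Function.Bijective (fun a : ZMod (p ^ n) => aeval a f) := by
  haveI : NeZero (p ^ n) := ⟨pow_ne_zero n hp.ne_zero⟩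
  rw [← Finite.injective_iff_bijective, PPaux.inj_iff]
  have h1 : ∀ x y : ℤ, (p : ℤ) ∣ eval x f - eval y f → (p : ℤ) ∣ x - y :=
    (PPaux.inj_iff p f).mp h3.1
  intro x y hd
  push_cast at hd ⊢
  exact PPaux.lift_inj hp f h1 h2 n hn x y hd

lemma PPaux.deriv_of_inj (hp : p.Prime) (f : ℤ[X]) {n : ℕ} (hn : 1 < n)
    (hinj : ∀ x y : ℤ, (p : ℤ) ^ n ∣ eval x f - eval y f → (p : ℤ) ^ n ∣ x - y)
    (a : ℤ) : ¬ (p : ℤ) ∣ eval a (derivative f) := by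
  intro hd
  obtain ⟨m, rfl⟩ : ∃ m, n = m + 1 := ⟨n - 1, by omega⟩
  have hm : 1 ≤ m := by omega
  obtain ⟨s, hs⟩ := PPaux.eval_add_sq f a ((p : ℤ) ^ m)
  obtain ⟨c, hc⟩ := hd
  have key : (p : ℤ) ^ (m + 1) ∣ eval (a + (p : ℤ) ^ m) f - eval a f := by
    have e : eval (a + (p : ℤ) ^ m) f - eval a f
        = (p : ℤ) ^ (m + 1) * c + ((p : ℤ) ^ m) ^ 2 * s := by
      rw [hs, hc]; ring
    rw [e]
    refine dvd_add (dvd_mul_right _ _) (Dvd.dvd.mul_right ?_ s)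
    rw [← pow_mul]
    exact pow_dvd_pow _ (by omega)
  have h2 := hinj _ _ key
  simp only [add_sub_cancel_left] at h2
  have hp0 : (0 : ℤ) < (p : ℤ) ^ m := by
    have : (0 : ℤ) < (p : ℤ) := by exact_mod_cast hp.pos
    positivity
  have hle : ((p : ℤ)) ^ (m + 1) ≤ (p : ℤ) ^ m := Int.le_of_dvd hp0 h2
  have h1p : (1 : ℤ) < (p : ℤ) := by exact_mod_cast hp.one_lt
  nlinarith [pow_succ (p : ℤ) m, hp0]

end Hensel
/-- **Corollary (permutation polynomials with integer coefficients).**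
Let `p` be a prime and `f ∈ ℤ[x]`.  The following are equivalent:
(1) `f` is a permutation polynomial on `ℤ_{p^n}[α]` for all `n ≥ 1`;
(2) `f` is a permutation polynomial on `ℤ_{p^n}[α]` for some `n ≥ 1`;
(3) `f` is a permutation polynomial on `ℤ_p` and `f'(a) ≢ 0 (mod p)` for all
    `a ∈ ℤ`;
(4) `f` is a permutation polynomial on `ℤ_{p^n}` for all `n ≥ 1`;
(5) `f` is a permutation polynomial on `ℤ_{p^n}` for some `n > 1`. -/
theorem perm_poly_int_coeff_tfae (p : ℕ) (hp : p.Prime) (f : ℤ[X]) :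
    List.TFAE
      [∀ n : ℕ, 1 ≤ n →
          Function.Bijective (fun z : DualNumber (ZMod (p ^ n)) => aeval z f),
        ∃ n : ℕ, 1 ≤ n ∧
          Function.Bijective (fun z : DualNumber (ZMod (p ^ n)) => aeval z f),
        (Function.Bijective (fun a : ZMod p => aeval a f)) ∧
          ∀ a : ℤ, ¬ (p : ℤ) ∣ eval a (derivative f),
        ∀ n : ℕ, 1 ≤ n →
          Function.Bijective (fun a : ZMod (p ^ n) => aeval a f),
        ∃ n : ℕ, 1 < n ∧
          Function.Bijective (fun a : ZMod (p ^ n) => aeval a f)] := by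
  
  haveI : Fact p.Prime := ⟨hp⟩
  tfae_have 3 → 4 := by
    rintro ⟨h3, h2⟩ n hn
    exact PPaux.bij_pow hp f h3 h2 n hn
  tfae_have 4 → 5 := by
    intro h
    exact ⟨2, one_lt_two, h 2 one_le_two⟩
  tfae_have 5 → 3 := by
    rintro ⟨n, hn, hbij⟩
    haveI : NeZero (p ^ n) := ⟨pow_ne_zero n hp.ne_zero⟩
    constructor
    · exact Finite.surjective_iff_bijective.mp
        (PPaux.surj_descend (dvd_pow_self p (by omega : n ≠ 0)) f hbij.2)
    · have hinj := (PPaux.inj_iff (p ^ n) f).mp hbij.1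
      push_cast at hinj
      exact PPaux.deriv_of_inj hp f hn hinj
  tfae_have 3 → 1 := by
    rintro ⟨h3, h2⟩ n hn
    haveI : NeZero (p ^ n) := ⟨pow_ne_zero n hp.ne_zero⟩
    rw [PPaux.dual_bij_iff]
    refine ⟨PPaux.bij_pow hp f h3 h2 n hn, ?_⟩
    intro a
    obtain ⟨a₀, rfl⟩ := ZMod.intCast_surjective a
    rw [PPaux.aeval_intCast_zmod]
    exact PPaux.isUnit_cast hp n (h2 a₀)
  tfae_have 1 → 2 := by
    intro h
    exact ⟨1, le_refl 1, h 1 (le_refl 1)⟩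
  tfae_have 2 → 3 := by
    rintro ⟨n, hn, hbij⟩
    haveI : NeZero (p ^ n) := ⟨pow_ne_zero n hp.ne_zero⟩
    rw [PPaux.dual_bij_iff] at hbij
    obtain ⟨hbij', hunit⟩ := hbij
    constructor
    · exact Finite.surjective_iff_bijective.mp
        (PPaux.surj_descend (dvd_pow_self p (by omega : n ≠ 0)) f hbij'.2)
    · intro a hd
      have hu := hunit ((a : ZMod (p ^ n)))
      rw [PPaux.aeval_intCast_zmod] at hu
      exact PPaux.not_isUnit_cast hp hn hd hu
  tfae_finish
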